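/- For every individual i ∈ I and every set A ⊆ I \ {i}, if i ∈ C^OA(A ∪ {i}) then either C^OA(A ∪ {i}) = C^OA(A) ∪ {i}, or C^OA(A ∪ {i}) = (C^OA(A) ∪ {i}) \ {j} for some j ∈ C^OA(A); and if i ∉ C^OA(A ∪ {i}) then C^OA(A ∪ {i}) = C^OA(A). -/
import Mathlib

set_option linter.unusedSectionVars false


open Finset

variable {α : Type*} [Fintype α] [DecidableEq α] [LinearOrder α]
variable {ρ : Type*} [Fintype ρ] [DecidableEq ρ]

/-- The top-`k` elements of `A` under the linear (merit) order on `α`, where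
higher means more meritorious: the members of `A` that have fewer than `k`
strictly higher-ranked elements in `A`.  If `|A| ≤ k` this is all of `A`. -/
def topk (k : ℕ) (A : Finset α) : Finset α :=
  A.filter fun i => (A.filter fun j => i < j).card < k

/-- Open-category selection of the over-and-above choice rule: the
`min(qo, |A ∩ acc|)` highest-ranked acceptable applicants. -/
def oaOpen (acc : Finset α) (qo : ℕ) (A : Finset α) : Finset α :=
  topk qo (A ∩ acc)

/-- Reserve-category-`r` selection of the over-and-above choice rule: the
`q r` highest-ranked acceptable type-`r` applicants not selected for the
open category. -/
def oaRes (acc : Finset α) (t : α → Option ρ) (qo : ℕ) (q : ρ → ℕ) (r : ρ)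
    (A : Finset α) : Finset α :=
  topk (q r) (((A ∩ acc) \ oaOpen acc qo A).filter fun i => t i = some r)

/-- The set of applicants chosen by the over-and-above choice rule. -/
def oaChosen (acc : Finset α) (t : α → Option ρ) (qo : ℕ) (q : ρ → ℕ)
    (A : Finset α) : Finset α :=
  oaOpen acc qo A ∪ Finset.univ.biUnion fun r => oaRes acc t qo q r A


def cnt (S : Finset α) (i : α) : ℕ := (S.filter fun j => i < j).card

lemma mem_topk {k : ℕ} {S : Finset α} {i : α} :
    i ∈ topk k S ↔ i ∈ S ∧ cnt S i < k := by simp [topk, cnt]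

lemma topk_subset {k : ℕ} {S : Finset α} : topk k S ⊆ S := filter_subset _ _

lemma cnt_mono {S : Finset α} {i j : α} (h : i < j) : cnt S j ≤ cnt S i := by
  apply card_le_card
  intro x hx
  simp only [mem_filter] at hx ⊢
  exact ⟨hx.1, h.trans hx.2⟩

lemma cnt_lt_cnt {S : Finset α} {i j : α} (hj : j ∈ S) (h : i < j) :
    cnt S j < cnt S i := by
  have hsub : insert j (S.filter fun x => j < x) ⊆ S.filter fun x => i < x := by
    intro x hx
    rcases mem_insert.mp hx with rfl | hx
    · exact mem_filter.mpr ⟨hj, h⟩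
    · rcases mem_filter.mp hx with ⟨h1, h2⟩
      exact mem_filter.mpr ⟨h1, h.trans h2⟩
  have := card_le_card hsub
  rwa [card_insert_of_notMem (by simp), Nat.succ_le_iff] at this

lemma cnt_lt_card {S : Finset α} {i : α} (hi : i ∈ S) : cnt S i < S.card :=
  card_lt_card (filter_ssubset.mpr ⟨i, hi, by simp⟩)

lemma cnt_inj {S : Finset α} {i j : α} (hi : i ∈ S) (hj : j ∈ S)
    (h : cnt S i = cnt S j) : i = j := by
  rcases lt_trichotomy i j with hlt | he | hlt
  · have := cnt_lt_cnt hj hlt; omega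
  · exact he
  · have := cnt_lt_cnt hi hlt; omega

lemma cnt_surj {S : Finset α} {n : ℕ} (hn : n < S.card) :
    ∃ i ∈ S, cnt S i = n := by
  have himg : S.image (cnt S) = range S.card := by
    apply eq_of_subset_of_card_le
    · intro x hx
      simp only [mem_image] at hx
      obtain ⟨i, hi, rfl⟩ := hx
      exact mem_range.mpr (cnt_lt_card hi)
    · rw [card_range, card_image_of_injOn fun a ha b hb => cnt_inj ha hb]
  have : n ∈ S.image (cnt S) := himg ▸ mem_range.mpr hn
  simpa [mem_image] using this

lemma topk_eq_self {k : ℕ} {S : Finset α} (h : S.card ≤ k) : topk k S = S :=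
  filter_eq_self.mpr fun i hi => lt_of_lt_of_le (cnt_lt_card hi) h

lemma cnt_insert_self {S : Finset α} {x : α} : cnt (insert x S) x = cnt S x := by
  unfold cnt
  rw [filter_insert, if_neg (lt_irrefl x)]

lemma cnt_le_insert (S : Finset α) (x y : α) : cnt S y ≤ cnt (insert x S) y :=
  card_le_card (filter_subset_filter _ (subset_insert _ _))

lemma cnt_insert_of_lt {S : Finset α} {x y : α} (hx : x ∉ S) (h : y < x) :
    cnt (insert x S) y = cnt S y + 1 := by
  unfold cnt
  rw [filter_insert, if_pos h, card_insert_of_notMem fun hm => hx (mem_of_mem_filter _ hm)]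

lemma cnt_insert_of_not_lt {S : Finset α} {x y : α} (h : ¬ y < x) :
    cnt (insert x S) y = cnt S y := by
  unfold cnt
  rw [filter_insert, if_neg h]

lemma topk_insert_of_ge {k : ℕ} {S : Finset α} {x : α} (hx : x ∉ S) (h : k ≤ cnt S x) :
    topk k (insert x S) = topk k S := by
  ext y
  simp only [mem_topk, mem_insert]
  constructor
  · rintro ⟨(rfl | hyS), hc⟩
    · rw [cnt_insert_self] at hc; omega
    · exact ⟨hyS, lt_of_le_of_lt (cnt_le_insert S x y) hc⟩
  · rintro ⟨hyS, hc⟩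
    refine ⟨Or.inr hyS, ?_⟩
    by_cases hyx : y < x
    · have := cnt_mono (S := S) hyx; omega
    · rw [cnt_insert_of_not_lt hyx]; exact hc

lemma topk_insert_of_card_lt {k : ℕ} {S : Finset α} {x : α} (hx : x ∉ S) (hk : S.card < k) :
    topk k (insert x S) = insert x (topk k S) := by
  rw [topk_eq_self (le_of_lt hk), topk_eq_self (by rw [card_insert_of_notMem hx]; omega)]

lemma topk_insert_swap {k : ℕ} {S : Finset α} {x : α} (hx : x ∉ S)
    (hcnt : cnt S x < k) (hcard : k ≤ S.card) :
    ∃ m ∈ topk k S, topk k (insert x S) = insert x (topk k S \ {m}) := by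
  obtain ⟨m, hmS, hm⟩ := cnt_surj (show k - 1 < S.card by omega)
  have hmx : m < x := by
    rcases lt_trichotomy m x with h | h | h
    · exact h
    · exact absurd hmS (h ▸ hx)
    · have := cnt_lt_cnt hmS h; omega
  refine ⟨m, mem_topk.mpr ⟨hmS, by omega⟩, ?_⟩
  ext y
  simp only [mem_topk, mem_insert, mem_sdiff, mem_singleton]
  constructor
  · rintro ⟨(rfl | hyS), hc⟩
    · exact Or.inl rfl
    · right
      refine ⟨⟨hyS, lt_of_le_of_lt (cnt_le_insert S x y) hc⟩, ?_⟩
      rintro rfl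
      rw [cnt_insert_of_lt hx hmx] at hc; omega
  · rintro (rfl | ⟨⟨hyS, hyc⟩, hym⟩)
    · exact ⟨Or.inl rfl, by rw [cnt_insert_self]; exact hcnt⟩
    · refine ⟨Or.inr hyS, ?_⟩
      have hne : cnt S y ≠ k - 1 := fun h => hym (cnt_inj hyS hmS (h.trans hm.symm))
      by_cases hyx : y < x
      · rw [cnt_insert_of_lt hx hyx]; omega
      · rw [cnt_insert_of_not_lt hyx]; omega

lemma insert_sdiff_insert'' {x : α} {S T : Finset α} (hx : x ∉ S) :
    insert x S \ insert x T = S \ T := by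
  ext y
  by_cases hy : y = x <;> simp [hy, hx]

lemma sdiff_sdiff_singleton' {m : α} {S T : Finset α} (hm : m ∈ S) :
    S \ (T \ {m}) = insert m (S \ T) := by
  ext y
  by_cases hy : y = m <;> simp [hy, hm] <;> tauto

lemma biUnion_split (f : ρ → Finset α) (r0 : ρ) :
    univ.biUnion f = f r0 ∪ (univ.erase r0).biUnion f := by
  conv_lhs => rw [← insert_erase (mem_univ r0)]
  rw [biUnion_insert]

lemma biUnion_congr_erase {f g : ρ → Finset α} {r0 : ρ}
    (h : ∀ r, r ≠ r0 → f r = g r) :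
    (univ.erase r0).biUnion f = (univ.erase r0).biUnion g :=
  biUnion_congr rfl fun r hr => h r (ne_of_mem_erase hr)

lemma notMem_biUnion_erase {f : ρ → Finset α} {r0 : ρ} {m : α}
    (h : ∀ r, r ≠ r0 → m ∉ f r) : m ∉ (univ.erase r0).biUnion f := by
  intro hmem
  obtain ⟨r, hr, hm⟩ := mem_biUnion.mp hmem
  exact h r (ne_of_mem_erase hr) hm

section flat
variable {W X Y : Finset α} {i m k0 : α}

lemma flatF2 : W ∪ (insert i X ∪ Y) = insert i (W ∪ (X ∪ Y)) := by
  ext y; simp [or_assoc]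

lemma flatF3 (hmW : m ∉ W) (hmY : m ∉ Y) (him : i ≠ m) :
    W ∪ (insert i (X \ {m}) ∪ Y) = insert i (W ∪ (X ∪ Y)) \ {m} := by
  ext y
  by_cases h1 : y = i <;> by_cases h2 : y = m <;>
    simp_all [mem_union, mem_insert, mem_sdiff, mem_singleton] <;> tauto

lemma flatF5 (hmX : m ∉ X) (hmY : m ∉ Y) (him : i ≠ m) :
    insert i (W \ {m}) ∪ (X ∪ Y) = insert i (W ∪ (X ∪ Y)) \ {m} := by
  ext y
  by_cases h1 : y = i <;> by_cases h2 : y = m <;>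
    simp_all [mem_union, mem_insert, mem_sdiff, mem_singleton] <;> tauto

lemma flatF6 (hmW : m ∈ W) :
    insert i (W \ {m}) ∪ (insert m X ∪ Y) = insert i (W ∪ (X ∪ Y)) := by
  ext y
  by_cases h1 : y = i <;> by_cases h2 : y = m <;>
    simp_all [mem_union, mem_insert, mem_sdiff, mem_singleton] <;> tauto

lemma flatF7 (hmW : m ∈ W) (hkW : k0 ∉ W) (hkY : k0 ∉ Y) (hik : i ≠ k0) (hmk : m ≠ k0) :
    insert i (W \ {m}) ∪ (insert m (X \ {k0}) ∪ Y) = insert i (W ∪ (X ∪ Y)) \ {k0} := by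
  ext y
  by_cases h1 : y = i <;> by_cases h2 : y = m <;> by_cases h3 : y = k0 <;>
    simp_all [mem_union, mem_insert, mem_sdiff, mem_singleton] <;> tauto

end flat

lemma flatF5' {W Y : Finset α} {i m : α} (hmY : m ∉ Y) (him : i ≠ m) :
    insert i (W \ {m}) ∪ Y = insert i (W ∪ Y) \ {m} := by
  ext y
  by_cases h1 : y = i <;> by_cases h2 : y = m <;>
    simp_all [mem_union, mem_insert, mem_sdiff, mem_singleton] <;> tauto

lemma union_biUnion_case2 (W : Finset α) (f f' : ρ → Finset α) (r0 : ρ) (i : α)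
    (h0 : f' r0 = insert i (f r0)) (h : ∀ r, r ≠ r0 → f' r = f r) :
    W ∪ univ.biUnion f' = insert i (W ∪ univ.biUnion f) := by
  rw [biUnion_split f' r0, biUnion_split f r0, biUnion_congr_erase h, h0, flatF2]

lemma union_biUnion_case3 (W : Finset α) (f f' : ρ → Finset α) (r0 : ρ) (i m : α)
    (h0 : f' r0 = insert i (f r0 \ {m})) (h : ∀ r, r ≠ r0 → f' r = f r)
    (hmW : m ∉ W) (hm : ∀ r, r ≠ r0 → m ∉ f r) (him : i ≠ m) :
    W ∪ univ.biUnion f' = insert i (W ∪ univ.biUnion f) \ {m} := by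
  rw [biUnion_split f' r0, biUnion_split f r0, biUnion_congr_erase h, h0]
  exact flatF3 hmW (notMem_biUnion_erase hm) him

lemma union_biUnion_case5 (W : Finset α) (f f' : ρ → Finset α) (i m : α)
    (h : ∀ r, f' r = f r) (hm : ∀ r, m ∉ f r) (him : i ≠ m) :
    insert i (W \ {m}) ∪ univ.biUnion f' = insert i (W ∪ univ.biUnion f) \ {m} := by
  rw [biUnion_congr rfl fun r _ => h r]
  refine flatF5' ?_ him
  intro hmem
  obtain ⟨r, -, hr⟩ := mem_biUnion.mp hmem
  exact hm r hr

lemma union_biUnion_case6 (W : Finset α) (f f' : ρ → Finset α) (r0 : ρ) (i m : α)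
    (h0 : f' r0 = insert m (f r0)) (h : ∀ r, r ≠ r0 → f' r = f r) (hmW : m ∈ W) :
    insert i (W \ {m}) ∪ univ.biUnion f' = insert i (W ∪ univ.biUnion f) := by
  rw [biUnion_split f' r0, biUnion_split f r0, biUnion_congr_erase h, h0, flatF6 hmW]

lemma union_biUnion_case7 (W : Finset α) (f f' : ρ → Finset α) (r0 : ρ) (i m k0 : α)
    (h0 : f' r0 = insert m (f r0 \ {k0})) (h : ∀ r, r ≠ r0 → f' r = f r)
    (hmW : m ∈ W) (hkW : k0 ∉ W) (hk : ∀ r, r ≠ r0 → k0 ∉ f r)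
    (hik : i ≠ k0) (hmk : m ≠ k0) :
    insert i (W \ {m}) ∪ univ.biUnion f' = insert i (W ∪ univ.biUnion f) \ {k0} := by
  rw [biUnion_split f' r0, biUnion_split f r0, biUnion_congr_erase h, h0]
  exact flatF7 hmW hkW (notMem_biUnion_erase hk) hik hmk

lemma topk_empty {k : ℕ} : topk k (∅ : Finset α) = ∅ := by simp [topk]

lemma insert_sdiff_notMem {i : α} {S T : Finset α} (h : i ∉ T) :
    insert i S \ T = insert i (S \ T) := by
  ext y
  by_cases hy : y = i <;> simp [hy, h]

def core (t : α → Option ρ) (qo : ℕ) (q : ρ → ℕ) (S : Finset α) : Finset α :=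
  topk qo S ∪ Finset.univ.biUnion fun r =>
    topk (q r) ((S \ topk qo S).filter fun x => t x = some r)

lemma core_subset {t : α → Option ρ} {qo : ℕ} {q : ρ → ℕ} {S : Finset α} :
    core t qo q S ⊆ S := by
  intro x hx
  rcases mem_union.mp hx with h | h
  · exact topk_subset h
  · obtain ⟨r, -, hr⟩ := mem_biUnion.mp h
    exact (mem_sdiff.mp (mem_filter.mp (topk_subset hr)).1).1

lemma core_trichotomy (t : α → Option ρ) (qo : ℕ) (q : ρ → ℕ) (i : α)
    (S : Finset α) (hiS : i ∉ S) :
    core t qo q (insert i S) = core t qo q S ∨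
    core t qo q (insert i S) = insert i (core t qo q S) ∨
    ∃ j ∈ core t qo q S,
      core t qo q (insert i S) = insert i (core t qo q S) \ {j} := by
  have hiO : i ∉ topk qo S := fun h => hiS (topk_subset h)
  by_cases h1 : qo ≤ cnt S i
  · -- open category unchanged
    have hO' : topk qo (insert i S) = topk qo S := topk_insert_of_ge hiS h1
    have hrem : insert i S \ topk qo S = insert i (S \ topk qo S) :=
      insert_sdiff_notMem hiO
    rcases hti : t i with _ | r0
    · -- i has no reserve category: nothing changes
      left
      simp only [core, hO']
      congr 1
      refine biUnion_congr rfl fun r _ => ?_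
      rw [hrem, filter_insert, if_neg (by simp [hti])]
    · have hiF : i ∉ (S \ topk qo S).filter fun x => t x = some r0 := fun h =>
        hiS (mem_sdiff.mp (mem_filter.mp h).1).1
      have hFr0 : ((insert i S \ topk qo S).filter fun x => t x = some r0)
          = insert i ((S \ topk qo S).filter fun x => t x = some r0) := by
        rw [hrem, filter_insert, if_pos hti]
      have hFr : ∀ r, r ≠ r0 →
          ((insert i S \ topk qo S).filter fun x => t x = some r)
          = (S \ topk qo S).filter fun x => t x = some r := by
        intro r hr
        rw [hrem, filter_insert, if_neg (by simp [hti]; exact fun h => hr h.symm)]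
      by_cases h2 : q r0 ≤ cnt ((S \ topk qo S).filter fun x => t x = some r0) i
      · -- i not good enough for its reserve either: unchanged
        left
        simp only [core, hO']
        congr 1
        refine biUnion_congr rfl fun r _ => ?_
        by_cases hr : r = r0
        · subst hr; rw [hFr0, topk_insert_of_ge hiF h2]
        · rw [hFr r hr]
      · by_cases h3 : ((S \ topk qo S).filter fun x => t x = some r0).card < q r0
        · -- reserve not full: i is added
          right; left
          simp only [core, hO']
          refine union_biUnion_case2 _ _ _ r0 i ?_ ?_
          · rw [hFr0, topk_insert_of_card_lt hiF h3]
          · intro r hr; rw [hFr r hr]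
        · -- reserve full: i displaces the lowest chosen of category r0
          push_neg at h2 h3
          obtain ⟨m, hm, htop⟩ := topk_insert_swap hiF h2 h3
          have hmS : m ∈ S \ topk qo S := (mem_filter.mp (topk_subset hm)).1
          have htm : t m = some r0 := (mem_filter.mp (topk_subset hm)).2
          right; right
          refine ⟨m, mem_union_right _ (mem_biUnion.mpr ⟨r0, mem_univ _, hm⟩), ?_⟩
          simp only [core, hO']
          refine union_biUnion_case3 _ _ _ r0 i m ?_ ?_ ?_ ?_ ?_
          · rw [hFr0, htop]
          · intro r hr; rw [hFr r hr]
          · exact fun h => (mem_sdiff.mp hmS).2 h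
          · intro r hr hmem
            have := (mem_filter.mp (topk_subset hmem)).2
            rw [htm] at this
            exact hr (Option.some.inj this).symm
          · rintro rfl; exact hiS (mem_sdiff.mp hmS).1
  · push_neg at h1
    by_cases h2 : S.card < qo
    · -- open category not full: i is added, reserves empty
      right; left
      have hSS : topk qo S = S := topk_eq_self (le_of_lt h2)
      have hO' : topk qo (insert i S) = insert i (topk qo S) :=
        topk_insert_of_card_lt hiS h2
      have hrem : S \ topk qo S = ∅ := by simp [hSS]
      have hrem' : insert i S \ insert i (topk qo S) = ∅ := by
        rw [insert_sdiff_insert'' hiS, hrem]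
      have hbu : (univ.biUnion fun _ : ρ => (∅ : Finset α)) = ∅ := by ext x; simp
      simp only [core, hO', hrem, hrem', filter_empty, topk_empty, hbu, union_empty]
    · push_neg at h2
      obtain ⟨m, hmO, hO'⟩ := topk_insert_swap hiS h1 h2
      have hmS : m ∈ S := topk_subset hmO
      have him : i ≠ m := fun h => hiS (h ▸ hmS)
      have hrem' : insert i S \ insert i (topk qo S \ {m}) = insert m (S \ topk qo S) := by
        rw [insert_sdiff_insert'' hiS, sdiff_sdiff_singleton' hmS]
      have hmrem : m ∉ S \ topk qo S := fun h => (mem_sdiff.mp h).2 hmO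
      rcases htm : t m with _ | r1
      · -- m has no reserve category: m is dropped
        right; right
        refine ⟨m, mem_union_left _ hmO, ?_⟩
        simp only [core, hO']
        refine union_biUnion_case5 _ _ _ i m ?_ ?_ him
        · intro r
          rw [hrem', filter_insert, if_neg (by simp [htm])]
        · intro r hmem
          exact hmrem (mem_filter.mp (topk_subset hmem)).1
      · have hmF : m ∉ (S \ topk qo S).filter fun x => t x = some r1 := fun h =>
          hmrem (mem_filter.mp h).1
        have hFr1 : ((insert i S \ insert i (topk qo S \ {m})).filter fun x => t x = some r1)
            = insert m ((S \ topk qo S).filter fun x => t x = some r1) := by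
          rw [hrem', filter_insert, if_pos htm]
        have hFr : ∀ r, r ≠ r1 →
            ((insert i S \ insert i (topk qo S \ {m})).filter fun x => t x = some r)
            = (S \ topk qo S).filter fun x => t x = some r := by
          intro r hr
          rw [hrem', filter_insert, if_neg (by simp [htm]; exact fun h => hr h.symm)]
        by_cases h4 : q r1 ≤ cnt ((S \ topk qo S).filter fun x => t x = some r1) m
        · -- m not good enough for its reserve: m is dropped
          right; right
          refine ⟨m, mem_union_left _ hmO, ?_⟩
          simp only [core, hO']
          refine union_biUnion_case5 _ _ _ i m ?_ ?_ him
          · intro r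
            by_cases hr : r = r1
            · subst hr; rw [hFr1, topk_insert_of_ge hmF h4]
            · rw [hFr r hr]
          · intro r hmem
            exact hmrem (mem_filter.mp (topk_subset hmem)).1
        · by_cases h5 : ((S \ topk qo S).filter fun x => t x = some r1).card < q r1
          · -- m slides into its reserve category: net gain of i
            right; left
            simp only [core, hO']
            refine union_biUnion_case6 _ _ _ r1 i m ?_ ?_ hmO
            · rw [hFr1, topk_insert_of_card_lt hmF h5]
            · intro r hr; rw [hFr r hr]
          · -- m displaces the lowest chosen k0 of reserve r1
            push_neg at h4 h5
            obtain ⟨k0, hk0, htop⟩ := topk_insert_swap hmF h4 h5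
            have hk0S : k0 ∈ S \ topk qo S := (mem_filter.mp (topk_subset hk0)).1
            have htk0 : t k0 = some r1 := (mem_filter.mp (topk_subset hk0)).2
            right; right
            refine ⟨k0, mem_union_right _ (mem_biUnion.mpr ⟨r1, mem_univ _, hk0⟩), ?_⟩
            simp only [core, hO']
            refine union_biUnion_case7 _ _ _ r1 i m k0 ?_ ?_ hmO ?_ ?_ ?_ ?_
            · rw [hFr1, htop]
            · intro r hr; rw [hFr r hr]
            · exact (mem_sdiff.mp hk0S).2
            · intro r hr hmem
              have := (mem_filter.mp (topk_subset hmem)).2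
              rw [htk0] at this
              exact hr (Option.some.inj this).symm
            · rintro rfl; exact hiS (mem_sdiff.mp hk0S).1
            · rintro rfl; exact hmF (topk_subset hk0)

/-- Adding an individual `i` to the applicant set: if `i` is
chosen from `A ∪ {i}`, then the chosen set either gains exactly `i`, or gains
`i` at the expense of exactly one previously chosen individual `j`; if `i` is
not chosen, the chosen set is unchanged. -/
theorem oa_chosen_insert
    (acc : Finset α) (t : α → Option ρ) (qo : ℕ) (q : ρ → ℕ)
    (i : α) (A : Finset α) (hiA : i ∉ A) :
    (i ∈ oaChosen acc t qo q (insert i A) →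
      oaChosen acc t qo q (insert i A) = insert i (oaChosen acc t qo q A) ∨
      ∃ j ∈ oaChosen acc t qo q A,
        oaChosen acc t qo q (insert i A) =
          insert i (oaChosen acc t qo q A) \ {j}) ∧
    (i ∉ oaChosen acc t qo q (insert i A) →
      oaChosen acc t qo q (insert i A) = oaChosen acc t qo q A) := by
  have hcore : ∀ X : Finset α, oaChosen acc t qo q X = core t qo q (X ∩ acc) :=
    fun _ => rfl
  have tri : oaChosen acc t qo q (insert i A) = oaChosen acc t qo q A ∨
      oaChosen acc t qo q (insert i A) = insert i (oaChosen acc t qo q A) ∨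
      ∃ j ∈ oaChosen acc t qo q A,
        oaChosen acc t qo q (insert i A) = insert i (oaChosen acc t qo q A) \ {j} := by
    by_cases hacc : i ∈ acc
    · rw [hcore, hcore, insert_inter_of_mem hacc]
      exact core_trichotomy t qo q i (A ∩ acc) fun h => hiA (mem_inter.mp h).1
    · left
      rw [hcore, hcore, insert_inter_of_notMem hacc]
  have hsub : oaChosen acc t qo q A ⊆ A := by
    rw [hcore]
    exact core_subset.trans inter_subset_left
  constructor
  · intro hi
    rcases tri with h | h | h
    · rw [h] at hi
      exact absurd (hsub hi) hiA
    · exact Or.inl h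
    · exact Or.inr h
  · intro hi
    rcases tri with h | h | h
    · exact h
    · rw [h] at hi
      exact absurd (mem_insert_self i _) hi
    · obtain ⟨j, hj, hEq⟩ := h
      rw [hEq] at hi
      have hij : i ≠ j := fun hh => hiA (hh ▸ hsub hj)
      exact absurd (mem_sdiff.mpr ⟨mem_insert_self i _, by simp [hij]⟩) hi
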